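/- Degree reduction preserves the SPI problem: let u > 0 satisfy u ≥ deg Λ(x) where Λ(x) is the SPI solution; for each i set s⁽ⁱ⁾ = max{τ⁽ⁱ⁾ − u, 0}, and define b̃⁽ⁱ⁾(x) and m̃⁽ⁱ⁾(x) by shifting coefficients: b̃_ℓ⁽ⁱ⁾ = b_{ℓ+s⁽ⁱ⁾}⁽ⁱ⁾ and m̃_ℓ⁽ⁱ⁾ = m_{ℓ+s⁽ⁱ⁾}⁽ⁱ⁾. Then the SPI problem with data (b̃⁽ⁱ⁾, m̃⁽ⁱ⁾, τ⁽ⁱ⁾ − s⁽ⁱ⁾) has the same solution Λ(x) as the original problem, and moreover b⁽ⁱ⁾(x)Λ(x) div m⁽ⁱ⁾(x) = b̃⁽ⁱ⁾(x)Λ(x) div m̃⁽ⁱ⁾(x). -/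

import Mathlib

open Polynomial

private lemma deg_mul_lt {F : Type*} [Field F] {p q : F[X]} {a c : ℕ}
    (hp : p.degree < (a : WithBot ℕ)) (hq : q.degree ≤ (c : WithBot ℕ)) :
    (p * q).degree < ((a + c : ℕ) : WithBot ℕ) := by
  rcases eq_or_ne p 0 with rfl | hp0
  · simpa using WithBot.bot_lt_coe (a + c)
  rcases eq_or_ne q 0 with rfl | hq0
  · simpa using WithBot.bot_lt_coe (a + c)
  have h1 : p.natDegree < a := by
    rwa [degree_eq_natDegree hp0, Nat.cast_lt] at hp
  have h2 : q.natDegree ≤ c := by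
    rwa [degree_eq_natDegree hq0, Nat.cast_le] at hq
  refine lt_of_le_of_lt (degree_mul_le p q) ?_
  rw [degree_eq_natDegree hp0, degree_eq_natDegree hq0, ← Nat.cast_add, Nat.cast_lt]
  omega

private lemma divmod_unique {F : Type*} [Field F] {p q k r : F[X]} (hq : q ≠ 0)
    (h : p = q * k + r) (hr : r.degree < q.degree) : p / q = k ∧ p % q = r := by
  have hmod : (p % q).degree < q.degree := EuclideanDomain.mod_lt p hq
  have hdm : q * (p / q) + p % q = p := EuclideanDomain.div_add_mod p q
  have hdiv : p / q = k := by
    by_contra hne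
    have hz : q * (p / q - k) = r - p % q := by linear_combination hdm + h
    have h2 : (r - p % q).degree < q.degree :=
      lt_of_le_of_lt (degree_sub_le _ _) (max_lt hr hmod)
    rw [← hz, degree_mul] at h2
    have h3 : (0 : WithBot ℕ) ≤ (p / q - k).degree :=
      zero_le_degree_iff.mpr (sub_ne_zero.mpr hne)
    have h4 : q.degree ≤ q.degree + (p / q - k).degree := le_add_of_nonneg_right h3
    exact absurd (lt_of_le_of_lt h4 h2) (lt_irrefl _)
  refine ⟨hdiv, ?_⟩
  have hx : p % q = p - q * k := by rw [← hdiv]; linear_combination hdm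
  rw [hx, h]; ring

private lemma spi_core {F : Type*} [Field F] {b m bt mt : F[X]} {s u : ℕ}
    (hs : 0 < s) (hu : 0 < u)
    (hm1 : 1 ≤ m.degree) (hb : b.degree < m.degree)
    (hτ : ((u + s : ℕ) : WithBot ℕ) ≤ m.degree)
    (hbt : ∀ ℓ, bt.coeff ℓ = b.coeff (ℓ + s))
    (hmt : ∀ ℓ, mt.coeff ℓ = m.coeff (ℓ + s)) :
    (∀ Λ : F[X], Λ.degree ≤ (u : WithBot ℕ) →
      (b * Λ % m).degree < ((u + s : ℕ) : WithBot ℕ) →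
      (bt * Λ % mt).degree < (u : WithBot ℕ) ∧ b * Λ / m = bt * Λ / mt) ∧
    (∀ g : F[X], g.degree ≤ (u : WithBot ℕ) →
      (bt * g % mt).degree < (u : WithBot ℕ) →
      (b * g % m).degree < ((u + s : ℕ) : WithBot ℕ)) := by
  have hm0 : m ≠ 0 := by rintro rfl; simp at hm1
  have hdm : m.degree = (m.natDegree : WithBot ℕ) := degree_eq_natDegree hm0
  set n := m.natDegree with hn
  have hn_ge : u + s ≤ n := by rwa [hdm, Nat.cast_le] at hτ
  have hs_le : s ≤ n := by omega
  have hmt_top : mt.coeff (n - s) ≠ 0 := by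
    rw [hmt, Nat.sub_add_cancel hs_le]
    exact leadingCoeff_ne_zero.mpr hm0
  have hmt_deg_ge : ((n - s : ℕ) : WithBot ℕ) ≤ mt.degree := le_degree_of_ne_zero hmt_top
  have hmt_deg_le : mt.degree ≤ ((n - s : ℕ) : WithBot ℕ) := by
    refine (degree_le_iff_coeff_zero _ _).mpr ?_
    intro k hk
    have hk' : n - s < k := by exact_mod_cast hk
    rw [hmt]
    apply coeff_eq_zero_of_degree_lt
    rw [hdm, Nat.cast_lt]; omega
  have hmt_deg : mt.degree = ((n - s : ℕ) : WithBot ℕ) := le_antisymm hmt_deg_le hmt_deg_ge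
  have hmt0 : mt ≠ 0 := fun h => hmt_top (by simp [h])
  have hu_le : u ≤ n - s := by omega
  have hmt_deg' : (u : WithBot ℕ) ≤ mt.degree := by
    rw [hmt_deg]; exact_mod_cast hu_le
  have hbt_deg : bt.degree < ((n - s : ℕ) : WithBot ℕ) := by
    rw [degree_lt_iff_coeff_zero]
    intro k hk
    have hk' : n - s ≤ k := by exact_mod_cast hk
    rw [hbt]
    apply coeff_eq_zero_of_degree_lt
    calc b.degree < m.degree := hb
      _ ≤ ((k + s : ℕ) : WithBot ℕ) := by rw [hdm, Nat.cast_le]; omega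
  set rb := b - X ^ s * bt with hrb_def
  set rm := m - X ^ s * mt with hrm_def
  have hshift : ∀ (p pt : F[X]), (∀ ℓ, pt.coeff ℓ = p.coeff (ℓ + s)) →
      (p - X ^ s * pt).degree < (s : WithBot ℕ) := by
    intro p pt hpt
    rw [degree_lt_iff_coeff_zero]
    intro k hk
    have hk' : s ≤ k := by exact_mod_cast hk
    obtain ⟨d, rfl⟩ : ∃ d, k = d + s := ⟨k - s, by omega⟩
    rw [coeff_sub, coeff_X_pow_mul, hpt, sub_self]
  have hrb : rb.degree < (s : WithBot ℕ) := hshift b bt hbt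
  have hrm : rm.degree < (s : WithBot ℕ) := hshift m mt hmt
  constructor
  · intro Λ hΛu hrem
    set q := b * Λ / m with hq_def
    set R := b * Λ % m with hR_def
    have hdm2 : m * q + R = b * Λ := EuclideanDomain.div_add_mod _ _
    have hq : q.degree < (u : WithBot ℕ) := by
      rcases eq_or_ne q 0 with hq0 | hq0
      · rw [hq0, degree_zero]; exact WithBot.bot_lt_coe u
      have h2 : (m * q).degree < m.degree + (u : WithBot ℕ) := by
        have hx : m * q = b * Λ - R := by linear_combination hdm2
        rw [hx]
        refine lt_of_le_of_lt (degree_sub_le _ _) (max_lt ?_ ?_)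
        · refine lt_of_le_of_lt (degree_mul_le _ _) ?_
          exact WithBot.add_lt_add_of_lt_of_le (by simp; intro hΛ; apply hq0; rw [hq_def, hΛ]; simp) hb hΛu
        · calc R.degree < m.degree := EuclideanDomain.mod_lt _ hm0
            _ ≤ m.degree + (u : WithBot ℕ) := le_add_of_nonneg_right (by
                exact_mod_cast Nat.zero_le u)
      rw [degree_mul] at h2
      exact (WithBot.add_lt_add_iff_left (by simp [degree_eq_bot, hm0])).mp h2
    have hE : (q * rm + R - rb * Λ).degree < ((u + s : ℕ) : WithBot ℕ) := by
      refine lt_of_le_of_lt (degree_sub_le _ _)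
        (max_lt (lt_of_le_of_lt (degree_add_le _ _) (max_lt ?_ ?_)) ?_)
      · exact deg_mul_lt hq (le_of_lt hrm)
      · exact hrem
      · simpa [Nat.add_comm] using deg_mul_lt hrb hΛu
    have hfac : X ^ s * (bt * Λ - mt * q) = q * rm + R - rb * Λ := by
      rw [hrb_def, hrm_def]; linear_combination -hdm2
    have hD : (bt * Λ - mt * q).degree < (u : WithBot ℕ) := by
      rcases eq_or_ne (bt * Λ - mt * q) 0 with h0 | h0
      · rw [h0, degree_zero]; exact WithBot.bot_lt_coe u
      have h5 : (s : WithBot ℕ) + (bt * Λ - mt * q).degree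
          < (s : WithBot ℕ) + (u : WithBot ℕ) := by
        rw [← degree_X_pow (R := F) s, ← degree_mul, hfac]
        calc (q * rm + R - rb * Λ).degree < ((u + s : ℕ) : WithBot ℕ) := hE
          _ = (X ^ s : F[X]).degree + (u : WithBot ℕ) := by
              rw [degree_X_pow, ← Nat.cast_add, Nat.add_comm]
      exact (WithBot.add_lt_add_iff_left (by simp)).mp h5
    have hkey : bt * Λ = mt * q + (bt * Λ - mt * q) := by ring
    obtain ⟨hdiv, hmod⟩ := divmod_unique hmt0 hkey (lt_of_lt_of_le hD hmt_deg')
    exact ⟨by rw [hmod]; exact hD, hdiv.symm⟩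
  · intro g hgu hrem
    set q := bt * g / mt with hq_def
    set R := bt * g % mt with hR_def
    have hdm2 : mt * q + R = bt * g := EuclideanDomain.div_add_mod _ _
    have hq : q.degree < (u : WithBot ℕ) := by
      rcases eq_or_ne q 0 with hq0 | hq0
      · rw [hq0, degree_zero]; exact WithBot.bot_lt_coe u
      have h2 : (mt * q).degree < mt.degree + (u : WithBot ℕ) := by
        have hx : mt * q = bt * g - R := by linear_combination hdm2
        rw [hx]
        refine lt_of_le_of_lt (degree_sub_le _ _) (max_lt ?_ ?_)
        · refine lt_of_le_of_lt (degree_mul_le _ _) ?_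
          exact WithBot.add_lt_add_of_lt_of_le (by simp; intro hg0; apply hq0; rw [hq_def, hg0]; simp)
            (lt_of_lt_of_le hbt_deg hmt_deg.ge) hgu
        · calc R.degree < (u : WithBot ℕ) := hrem
            _ ≤ mt.degree + (u : WithBot ℕ) :=
                le_add_of_nonneg_left (zero_le_degree_iff.mpr hmt0)
      rw [degree_mul] at h2
      exact (WithBot.add_lt_add_iff_left (by simp [degree_eq_bot, hmt0])).mp h2
    have hEdeg : (X ^ s * R - rm * q + rb * g).degree < ((u + s : ℕ) : WithBot ℕ) := by
      refine lt_of_le_of_lt (degree_add_le _ _)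
        (max_lt (lt_of_le_of_lt (degree_sub_le _ _) (max_lt ?_ ?_)) ?_)
      · rw [mul_comm]
        exact deg_mul_lt hrem (degree_X_pow (R := F) s).le
      · simpa [Nat.add_comm] using deg_mul_lt hrm hq.le
      · simpa [Nat.add_comm] using deg_mul_lt hrb hgu
    have hkey : b * g = m * q + (X ^ s * R - rm * q + rb * g) := by
      rw [hrb_def, hrm_def]; linear_combination (-(X : F[X]) ^ s) * hdm2
    obtain ⟨hdiv, hmod⟩ := divmod_unique hm0 hkey (lt_of_lt_of_le hEdeg hτ)
    rw [hmod]; exact hEdeg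

/-- Degree reduction: stripping off the irrelevant low-order coefficients
(`s⁽ⁱ⁾ = max{τ⁽ⁱ⁾ − u, 0}` of them, which is `τ⁽ⁱ⁾ - u` in truncated ℕ-subtraction)
yields an SPI problem with the same solution `Λ`, and moreover the quotients of the
corresponding divisions agree. -/
theorem spi_degree_reduction {F : Type*} [Field F] {L : ℕ}
    (b m bt mt : Fin L → F[X]) (τ : Fin L → ℕ) (u : ℕ) (hu : 0 < u)
    (hm : ∀ i, 1 ≤ (m i).degree)
    (hb : ∀ i, (b i).degree < (m i).degree)
    (hτ : ∀ i, (τ i : WithBot ℕ) ≤ (m i).degree)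
    (Λ : F[X]) (hΛ0 : Λ ≠ 0)
    (hΛs : ∀ i, (b i * Λ % m i).degree < (τ i : WithBot ℕ))
    (hΛmin : ∀ g : F[X], g ≠ 0 →
      (∀ i, (b i * g % m i).degree < (τ i : WithBot ℕ)) → Λ.degree ≤ g.degree)
    (hΛu : Λ.degree ≤ (u : WithBot ℕ))
    (hbt : ∀ i ℓ, (bt i).coeff ℓ = (b i).coeff (ℓ + (τ i - u)))
    (hmt : ∀ i ℓ, (mt i).coeff ℓ = (m i).coeff (ℓ + (τ i - u))) :
    (∀ i, (bt i * Λ % mt i).degree < ((τ i - (τ i - u) : ℕ) : WithBot ℕ)) ∧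
    (∀ g : F[X], g ≠ 0 →
      (∀ i, (bt i * g % mt i).degree < ((τ i - (τ i - u) : ℕ) : WithBot ℕ)) →
        Λ.degree ≤ g.degree) ∧
    (∀ i, b i * Λ / m i = bt i * Λ / mt i) := by
  have keyA : ∀ i, ∀ Λ' : F[X], Λ'.degree ≤ (u : WithBot ℕ) →
      (b i * Λ' % m i).degree < (τ i : WithBot ℕ) →
      (bt i * Λ' % mt i).degree < ((τ i - (τ i - u) : ℕ) : WithBot ℕ) ∧
      b i * Λ' / m i = bt i * Λ' / mt i := by
    intro i Λ' hΛ'u hrem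
    by_cases hc : τ i ≤ u
    · have hs0 : τ i - u = 0 := Nat.sub_eq_zero_of_le hc
      have hbte : bt i = b i := by ext ℓ; rw [hbt i ℓ, hs0, Nat.add_zero]
      have hmte : mt i = m i := by ext ℓ; rw [hmt i ℓ, hs0, Nat.add_zero]
      rw [hbte, hmte, hs0, Nat.sub_zero]
      exact ⟨hrem, rfl⟩
    · push_neg at hc
      have hs : 0 < τ i - u := by omega
      have hus : u + (τ i - u) = τ i := by omega
      have hts : τ i - (τ i - u) = u := by omega
      have := (spi_core hs hu (hm i) (hb i) (by rw [hus]; exact hτ i)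
        (hbt i) (hmt i)).1 Λ' hΛ'u (by rw [hus]; exact hrem)
      rw [hts]
      exact this
  have keyB : ∀ g : F[X], g.degree ≤ (u : WithBot ℕ) →
      (∀ i, (bt i * g % mt i).degree < ((τ i - (τ i - u) : ℕ) : WithBot ℕ)) →
      ∀ i, (b i * g % m i).degree < (τ i : WithBot ℕ) := by
    intro g hg hcond i
    by_cases hc : τ i ≤ u
    · have hs0 : τ i - u = 0 := Nat.sub_eq_zero_of_le hc
      have hbte : bt i = b i := by ext ℓ; rw [hbt i ℓ, hs0, Nat.add_zero]
      have hmte : mt i = m i := by ext ℓ; rw [hmt i ℓ, hs0, Nat.add_zero]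
      have := hcond i
      rw [hbte, hmte, hs0, Nat.sub_zero] at this
      exact this
    · push_neg at hc
      have hs : 0 < τ i - u := by omega
      have hus : u + (τ i - u) = τ i := by omega
      have hts : τ i - (τ i - u) = u := by omega
      have hcond' := hcond i
      rw [hts] at hcond'
      have := (spi_core hs hu (hm i) (hb i) (by rw [hus]; exact hτ i)
        (hbt i) (hmt i)).2 g hg hcond'
      rwa [hus] at this
  refine ⟨fun i => (keyA i Λ hΛu (hΛs i)).1, ?_, fun i => (keyA i Λ hΛu (hΛs i)).2⟩
  intro g hg hcond
  rcases le_or_gt Λ.degree g.degree with h | h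
  · exact h
  · exact hΛmin g hg (keyB g (le_of_lt (lt_of_lt_of_le h hΛu)) hcond)
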